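/- Let Y be a pointed metric space, W a Banach space, and T : Y → W Lipschitz with T(0)=0. If T is MS-Lipschitz p-nuclear, then T is (Cohen) Lipschitz p-nuclear, i.e. there is K > 0 such that for all finite families x_l, y_l ∈ Y and a_l* ∈ W*: |Σ_l ⟨T x_l − T y_l, a_l*⟩| ≤ K sup_{f ∈ B_{Y^#}} (Σ_l |f(x_l) − f(y_l)|^p)^{1/p} · sup_{a ∈ B_{W**}...} (Σ_l |⟨a_l*, a⟩|^{p*})^{1/p*} where the last factor is ‖(a_l*)‖_{ℓ_{p*}^{k,w}(W*)}. -/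

import Mathlib

open scoped TensorProduct
open NormedSpace Finset

noncomputable section

/-- The strong `ℓ_p^m` norm of a finite family in a normed space. -/
def strongLp {E : Type*} [NormedAddCommGroup E] (p : ℝ) {m : ℕ} (x : Fin m → E) : ℝ :=
  (∑ j, ‖x j‖ ^ p) ^ (1 / p)

/-- The weak `ℓ_p^{m,w}` norm of a finite family in a normed space. -/
def weakLp {E : Type*} [NormedAddCommGroup E] [NormedSpace ℝ E] (p : ℝ) {m : ℕ}
    (x : Fin m → E) : ℝ :=
  sSup {r : ℝ | ∃ φ : StrongDual ℝ E, ‖φ‖ ≤ 1 ∧ r = (∑ j, |φ (x j)| ^ p) ^ (1 / p)}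

/-- A continuous linear operator is `p`-summing. -/
def IsPSumming {E F : Type*} [NormedAddCommGroup E] [NormedSpace ℝ E]
    [NormedAddCommGroup F] [NormedSpace ℝ F] (p : ℝ) (u : E →L[ℝ] F) : Prop :=
  ∃ K > 0, ∀ (m : ℕ) (x : Fin m → E),
    strongLp p (fun j => u (x j)) ≤ K * weakLp p x

/-- A continuous linear operator is (Cohen) strongly `p`-summing (`q` is the conjugate of `p`). -/
def IsStronglyPSumming {E F : Type*} [NormedAddCommGroup E] [NormedSpace ℝ E]
    [NormedAddCommGroup F] [NormedSpace ℝ F] (p q : ℝ) (u : E →L[ℝ] F) : Prop :=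
  ∃ K > 0, ∀ (m : ℕ) (x : Fin m → E) (φ : Fin m → StrongDual ℝ F),
    ∑ j, |φ j (u (x j))| ≤ K * strongLp p x * weakLp q φ

/-- A continuous linear operator is (Cohen) `p`-nuclear (`q` is the conjugate of `p`). -/
def IsPNuclear {E F : Type*} [NormedAddCommGroup E] [NormedSpace ℝ E]
    [NormedAddCommGroup F] [NormedSpace ℝ F] (p q : ℝ) (u : E →L[ℝ] F) : Prop :=
  ∃ K > 0, ∀ (m : ℕ) (x : Fin m → E) (φ : Fin m → StrongDual ℝ F),
    ∑ j, |φ j (u (x j))| ≤ K * weakLp p x * weakLp q φ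

/-- The Chevet–Saphar norm `d_p` on a tensor product (`q` is the conjugate of `p`):
infimum over all finite representations of `z`. -/
def dpNorm {E G : Type*} [NormedAddCommGroup E] [NormedSpace ℝ E]
    [NormedAddCommGroup G] [NormedSpace ℝ G] (p q : ℝ) (z : TensorProduct ℝ E G) : ℝ :=
  sInf {r : ℝ | ∃ (m : ℕ) (n : Fin m → E) (h : Fin m → G),
    z = ∑ j, n j ⊗ₜ[ℝ] h j ∧ r = weakLp p n * strongLp q h}

/-- The Chevet–Saphar norm `g_p` on a tensor product (`q` is the conjugate of `p`). -/
def gpNorm {E G : Type*} [NormedAddCommGroup E] [NormedSpace ℝ E]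
    [NormedAddCommGroup G] [NormedSpace ℝ G] (p q : ℝ) (z : TensorProduct ℝ E G) : ℝ :=
  sInf {r : ℝ | ∃ (m : ℕ) (n : Fin m → E) (h : Fin m → G),
    z = ∑ j, n j ⊗ₜ[ℝ] h j ∧ r = strongLp p n * weakLp q h}

/-- The tensor norm `w_p` (`q` is the conjugate of `p`). -/
def wpNorm {E G : Type*} [NormedAddCommGroup E] [NormedSpace ℝ E]
    [NormedAddCommGroup G] [NormedSpace ℝ G] (p q : ℝ) (z : TensorProduct ℝ E G) : ℝ :=
  sInf {r : ℝ | ∃ (m : ℕ) (n : Fin m → E) (h : Fin m → G),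
    z = ∑ j, n j ⊗ₜ[ℝ] h j ∧ r = weakLp p n * weakLp q h}

/-- `E`, together with the map `δ : Y → E`, is (isometrically) the Lipschitz-free space
of the pointed metric space `(Y, y₀)`: `δ` sends the base point to `0`, is an isometric
embedding, has dense linear span, and the norm of finite combinations of point evaluations
is computed against the unit ball of `Lip₀(Y)`. -/
structure IsFreeSpace (Y : Type*) [MetricSpace Y] (y₀ : Y)
    (E : Type*) [NormedAddCommGroup E] [NormedSpace ℝ E] [CompleteSpace E]
    (δ : Y → E) : Prop where
  map_base : δ y₀ = 0
  isometry : ∀ x y : Y, ‖δ x - δ y‖ = dist x y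
  dense_span : (Submodule.span ℝ (Set.range δ)).topologicalClosure = ⊤
  norm_eq : ∀ (n : ℕ) (a : Fin n → ℝ) (x : Fin n → Y),
    ‖∑ i, a i • δ (x i)‖ =
      sSup {r : ℝ | ∃ s : Y → ℝ, LipschitzWith 1 s ∧ s y₀ = 0 ∧ r = |∑ i, a i * s (x i)|}

end

noncomputable section

variable {Y W FY FW : Type*} [MetricSpace Y] [MetricSpace W]
  [NormedAddCommGroup FY] [NormedSpace ℝ FY] [NormedAddCommGroup FW] [NormedSpace ℝ FW]

/-- `T : Y → W` is MS-Lipschitz `p`-summing (`q` is the conjugate of `p`), the free spaces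
of `Y` and `W` being realized as `FY`, `FW` via `δY`, `δW`.  Elements of `W^# = F(W)^*` are
encoded as elements of `StrongDual ℝ FW`, and `d_p^L` is the Chevet–Saphar norm computed in
`F(Y) ⊗ W^#`. -/
def MSLipPSumming (p q : ℝ) (δY : Y → FY) (δW : W → FW) (T : Y → W) : Prop :=
  ∃ K > 0, ∀ (k : ℕ) (x y : Fin k → Y) (f : Fin k → StrongDual ℝ FW),
    |∑ l, (f l (δW (T (x l))) - f l (δW (T (y l))))| ≤
      K * dpNorm p q (∑ l, (δY (x l) - δY (y l)) ⊗ₜ[ℝ] f l)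

/-- `T : Y → W` is MS-strongly Lipschitz `p`-summing (`q` is the conjugate of `p`). -/
def MSStronglyLipPSumming (p q : ℝ) (δY : Y → FY) (δW : W → FW) (T : Y → W) : Prop :=
  ∃ K > 0, ∀ (k : ℕ) (x y : Fin k → Y) (f : Fin k → StrongDual ℝ FW),
    |∑ l, (f l (δW (T (x l))) - f l (δW (T (y l))))| ≤
      K * gpNorm p q (∑ l, (δY (x l) - δY (y l)) ⊗ₜ[ℝ] f l)

/-- `T : Y → W` is MS-Lipschitz `p`-nuclear (`q` is the conjugate of `p`). -/
def MSLipPNuclear (p q : ℝ) (δY : Y → FY) (δW : W → FW) (T : Y → W) : Prop :=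
  ∃ K > 0, ∀ (k : ℕ) (x y : Fin k → Y) (f : Fin k → StrongDual ℝ FW),
    |∑ l, (f l (δW (T (x l))) - f l (δW (T (y l))))| ≤
      K * wpNorm p q (∑ l, (δY (x l) - δY (y l)) ⊗ₜ[ℝ] f l)

end
section AuxLemmas

open ContinuousLinearMap

variable {E : Type*} [NormedAddCommGroup E] [NormedSpace ℝ E]

lemma weakLp_set_bddAbove (p : ℝ) (hp : 0 < p) {m : ℕ} (x : Fin m → E) :
    BddAbove {r : ℝ | ∃ φ : StrongDual ℝ E, ‖φ‖ ≤ 1 ∧ r = (∑ j, |φ (x j)| ^ p) ^ (1 / p)} := by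
  refine ⟨(∑ j, ‖x j‖ ^ p) ^ (1 / p), ?_⟩
  rintro r ⟨φ, hφ, rfl⟩
  have h1 : ∀ j, |φ (x j)| ^ p ≤ ‖x j‖ ^ p := fun j => by
    refine Real.rpow_le_rpow (abs_nonneg _) ?_ hp.le
    calc |φ (x j)| = ‖φ (x j)‖ := (Real.norm_eq_abs _).symm
      _ ≤ ‖φ‖ * ‖x j‖ := φ.le_opNorm _
      _ ≤ 1 * ‖x j‖ := by gcongr
      _ = ‖x j‖ := one_mul _
  exact Real.rpow_le_rpow (Finset.sum_nonneg fun j _ => Real.rpow_nonneg (abs_nonneg _) _)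
    (Finset.sum_le_sum fun j _ => h1 j) (by positivity)

lemma weakLp_nonneg (p : ℝ) {m : ℕ} (x : Fin m → E) : 0 ≤ weakLp p x := by
  refine Real.sSup_nonneg ?_
  rintro r ⟨φ, hφ, rfl⟩
  exact Real.rpow_nonneg (Finset.sum_nonneg fun j _ => Real.rpow_nonneg (abs_nonneg _) _) _

/-- The barycenter map `β : F(W) → W` for a Banach space `W`. -/
lemma IsFreeSpace.exists_barycenter {W FW : Type*} [NormedAddCommGroup W] [NormedSpace ℝ W]
    [CompleteSpace W] [NormedAddCommGroup FW] [NormedSpace ℝ FW] [CompleteSpace FW]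
    {δW : W → FW} (hFW : IsFreeSpace W 0 FW δW) :
    ∃ β : FW →L[ℝ] W, (∀ w, β (δW w) = w) ∧ ‖β‖ ≤ 1 := by
  classical
  have key : ∀ (n : ℕ) (a : Fin n → ℝ) (x : Fin n → W),
      ‖∑ i, a i • x i‖ ≤ ‖∑ i, a i • δW (x i)‖ := by
    intro n a x
    refine norm_le_dual_bound ℝ _ (norm_nonneg _) fun g => ?_
    rcases eq_or_ne g 0 with rfl | hg
    · simp
    have hgpos : (0 : ℝ) < ‖g‖ := norm_pos_iff.mpr hg
    set s : W → ℝ := fun w => ‖g‖⁻¹ * g w with hs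
    have hs1 : LipschitzWith 1 s := by
      refine LipschitzWith.of_dist_le_mul fun w w' => ?_
      have h2 : s w - s w' = ‖g‖⁻¹ * g (w - w') := by
        simp only [hs, map_sub]; ring
      rw [NNReal.coe_one, one_mul, Real.dist_eq, h2, abs_mul, abs_inv, abs_norm]
      calc ‖g‖⁻¹ * |g (w - w')| ≤ ‖g‖⁻¹ * (‖g‖ * ‖w - w'‖) := by
            refine mul_le_mul_of_nonneg_left ?_ (by positivity)
            calc |g (w - w')| = ‖g (w - w')‖ := (Real.norm_eq_abs _).symm
              _ ≤ ‖g‖ * ‖w - w'‖ := g.le_opNorm _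
        _ = ‖w - w'‖ := by field_simp
        _ = dist w w' := (dist_eq_norm w w').symm
    have hs0 : s 0 = 0 := by simp [hs]
    have hbdd : BddAbove {r : ℝ | ∃ t : W → ℝ, LipschitzWith 1 t ∧ t 0 = 0 ∧
        r = |∑ i, a i * t (x i)|} := by
      refine ⟨∑ i, |a i| * ‖x i‖, ?_⟩
      rintro r ⟨t, ht1, ht0, rfl⟩
      calc |∑ i, a i * t (x i)| ≤ ∑ i, |a i * t (x i)| := Finset.abs_sum_le_sum_abs _ _
        _ ≤ ∑ i, |a i| * ‖x i‖ := by
          refine Finset.sum_le_sum fun i _ => ?_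
          rw [abs_mul]
          refine mul_le_mul_of_nonneg_left ?_ (abs_nonneg _)
          calc |t (x i)| = dist (t (x i)) (t 0) := by rw [Real.dist_eq, ht0, sub_zero]
            _ ≤ 1 * dist (x i) 0 := by
                have := ht1.dist_le_mul (x i) 0
                simpa using this
            _ = ‖x i‖ := by rw [one_mul, dist_zero_right]
    have hle : |∑ i, a i * s (x i)| ≤ ‖∑ i, a i • δW (x i)‖ := by
      rw [hFW.norm_eq]
      exact le_csSup hbdd ⟨s, hs1, hs0, rfl⟩
    have heq : ∑ i, a i * s (x i) = ‖g‖⁻¹ * g (∑ i, a i • x i) := by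
      rw [map_sum, Finset.mul_sum]
      refine Finset.sum_congr rfl fun i _ => ?_
      simp only [hs, map_smul, smul_eq_mul]; ring
    rw [heq, abs_mul, abs_inv, abs_norm] at hle
    rw [Real.norm_eq_abs]
    calc |g (∑ i, a i • x i)| = ‖g‖ * (‖g‖⁻¹ * |g (∑ i, a i • x i)|) := by field_simp
      _ ≤ ‖g‖ * ‖∑ i, a i • δW (x i)‖ := mul_le_mul_of_nonneg_left hle hgpos.le
      _ = ‖∑ i, a i • δW (x i)‖ * ‖g‖ := mul_comm _ _
  set L : (W →₀ ℝ) →ₗ[ℝ] FW := Finsupp.linearCombination ℝ δW with hL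
  set B : (W →₀ ℝ) →ₗ[ℝ] W := Finsupp.linearCombination ℝ id with hB
  have keyF : ∀ c : W →₀ ℝ, ‖B c‖ ≤ ‖L c‖ := by
    intro c
    set e := c.support.equivFin with he
    have hBc : B c = ∑ i : Fin c.support.card, c ((e.symm i : W)) • ((e.symm i : W)) := by
      rw [hB, Finsupp.linearCombination_apply, Finsupp.sum,
        ← Finset.sum_coe_sort c.support (fun w => c w • (id w : W))]
      exact (Equiv.sum_comp e.symm (fun j : c.support => c (j : W) • ((j : W)))).symm
    have hLc : L c = ∑ i : Fin c.support.card, c ((e.symm i : W)) • δW ((e.symm i : W)) := by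
      rw [hL, Finsupp.linearCombination_apply, Finsupp.sum,
        ← Finset.sum_coe_sort c.support (fun w => c w • δW w)]
      exact (Equiv.sum_comp e.symm (fun j : c.support => c (j : W) • δW (j : W))).symm
    rw [hBc, hLc]
    exact key _ _ _
  have hker : LinearMap.ker L ≤ LinearMap.ker B := by
    intro c hc
    rw [LinearMap.mem_ker] at hc ⊢
    have h3 := keyF c
    rw [hc, norm_zero] at h3
    exact norm_le_zero_iff.mp h3
  set Bq : ((W →₀ ℝ) ⧸ LinearMap.ker L) →ₗ[ℝ] W := (LinearMap.ker L).liftQ B hker with hBq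
  set eqv := L.quotKerEquivRange with heqv
  set β₀ : ↥(LinearMap.range L) →ₗ[ℝ] W := Bq ∘ₗ (eqv.symm : _ ≃ₗ[ℝ] _).toLinearMap with hβ₀def
  have hβ₀ : ∀ c : W →₀ ℝ, β₀ ⟨L c, LinearMap.mem_range_self L c⟩ = B c := by
    intro c
    have h5 : eqv.symm ⟨L c, LinearMap.mem_range_self L c⟩ = (LinearMap.ker L).mkQ c :=
      L.quotKerEquivRange_symm_apply_image c (LinearMap.mem_range_self L c)
    show Bq (eqv.symm ⟨L c, LinearMap.mem_range_self L c⟩) = B c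
    rw [h5]
    exact Submodule.liftQ_apply _ B c
  have hβ₀norm : ∀ m : ↥(LinearMap.range L), ‖β₀ m‖ ≤ 1 * ‖m‖ := by
    rintro ⟨z, hz⟩
    obtain ⟨c, rfl⟩ := hz
    rw [one_mul]
    calc ‖β₀ ⟨L c, LinearMap.mem_range_self L c⟩‖ = ‖B c‖ := congrArg norm (hβ₀ c)
      _ ≤ ‖L c‖ := keyF c
  set βc : ↥(LinearMap.range L) →L[ℝ] W := β₀.mkContinuous 1 hβ₀norm with hβc
  have hrange : LinearMap.range L = Submodule.span ℝ (Set.range δW) := by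
    rw [hL, Finsupp.range_linearCombination]
  have hdense : DenseRange ((LinearMap.range L).subtypeL) := by
    have h6 : (LinearMap.range L).topologicalClosure = ⊤ := by rw [hrange]; exact hFW.dense_span
    have h7 : Set.range ((LinearMap.range L).subtypeL) = ((LinearMap.range L : Submodule ℝ FW) : Set FW) :=
      Subtype.range_val
    rw [DenseRange, h7, dense_iff_closure_eq, ← Submodule.topologicalClosure_coe, h6,
      Submodule.top_coe]
  have hbound : ∀ m : ↥(LinearMap.range L), ‖m‖ ≤ ((1 : NNReal) : ℝ) * ‖(LinearMap.range L).subtypeL m‖ := by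
    intro m; simp
  set β : FW →L[ℝ] W := βc.extend (LinearMap.range L).subtypeL with hβ
  have hβmem : ∀ w : W, δW w ∈ LinearMap.range L := by
    intro w
    refine ⟨Finsupp.single w 1, ?_⟩
    rw [hL, Finsupp.linearCombination_single, one_smul]
  refine ⟨β, ?_, ?_⟩
  · intro w
    have hLs : L (Finsupp.single w 1) = δW w := by
      rw [hL, Finsupp.linearCombination_single, one_smul]
    have h8 : (⟨δW w, hβmem w⟩ : ↥(LinearMap.range L)) =
        ⟨L (Finsupp.single w 1), LinearMap.mem_range_self L _⟩ := Subtype.ext hLs.symm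
    have h9 : β (δW w) = βc ⟨δW w, hβmem w⟩ :=
      ContinuousLinearMap.extend_eq βc hdense
        (ContinuousLinearMap.isUniformEmbedding_of_bound _ hbound).isUniformInducing
        (⟨δW w, hβmem w⟩ : ↥(LinearMap.range L))
    rw [h9, h8]
    show β₀ ⟨L (Finsupp.single w 1), LinearMap.mem_range_self L _⟩ = w
    rw [hβ₀, hB, Finsupp.linearCombination_single, one_smul]
    rfl
  · have h10 := ContinuousLinearMap.opNorm_extend_le βc hdense
      hbound
    have h11 : ‖βc‖ ≤ 1 := LinearMap.mkContinuous_norm_le β₀ zero_le_one hβ₀norm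
    calc ‖β‖ ≤ ((1 : NNReal) : ℝ) * ‖βc‖ := h10
      _ ≤ 1 * 1 := by rw [NNReal.coe_one]; exact mul_le_mul_of_nonneg_left h11 zero_le_one
      _ = 1 := one_mul 1

end AuxLemmas

/-- for `W` a Banach space, every MS-Lipschitz `p`-nuclear operator
`T : Y → W` is (Cohen) Lipschitz `p`-nuclear. -/
theorem msLipPNuclear_implies_lipschitzPNuclear
    {Y W FY FW : Type*} [MetricSpace Y] [Inhabited Y]
    [NormedAddCommGroup W] [NormedSpace ℝ W] [CompleteSpace W]
    [NormedAddCommGroup FY] [NormedSpace ℝ FY] [CompleteSpace FY]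
    [NormedAddCommGroup FW] [NormedSpace ℝ FW] [CompleteSpace FW]
    {δY : Y → FY} {δW : W → FW}
    (hFY : IsFreeSpace Y default FY δY) (hFW : IsFreeSpace W 0 FW δW)
    {p q : ℝ} (hpq : p.HolderConjugate q)
    (T : Y → W) (hTlip : ∃ K, LipschitzWith K T) (hT0 : T default = 0)
    (hMS : MSLipPNuclear p q δY δW T) :
    ∃ K > 0, ∀ (k : ℕ) (x y : Fin k → Y) (a : Fin k → StrongDual ℝ W),
      |∑ l, (a l (T (x l)) - a l (T (y l)))| ≤
        K * sSup {r : ℝ | ∃ s : Y → ℝ, LipschitzWith 1 s ∧ s default = 0 ∧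
            r = (∑ l, |s (x l) - s (y l)| ^ p) ^ (1 / p)} *
          weakLp q a := by
  classical
  obtain ⟨β, hβ1, hβ2⟩ := hFW.exists_barycenter
  obtain ⟨K, hK, hKle⟩ := hMS
  refine ⟨K, hK, fun k x y a => ?_⟩
  have hp0 : 0 < p := hpq.pos
  have hq0 : 0 < q := hpq.symm.pos
  set f : Fin k → StrongDual ℝ FW := fun l => (a l).comp β with hf
  set Sset := {r : ℝ | ∃ s : Y → ℝ, LipschitzWith 1 s ∧ s default = 0 ∧
      r = (∑ l, |s (x l) - s (y l)| ^ p) ^ (1 / p)} with hSset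
  have hLHS : ∑ l, (a l (T (x l)) - a l (T (y l))) =
      ∑ l, (f l (δW (T (x l))) - f l (δW (T (y l)))) := by
    refine Finset.sum_congr rfl fun l _ => ?_
    simp [hf, hβ1]
  have hSbdd : BddAbove Sset := by
    refine ⟨(∑ l, (dist (x l) (y l)) ^ p) ^ (1 / p), ?_⟩
    rintro r ⟨s, hs1, hs0, rfl⟩
    refine Real.rpow_le_rpow (Finset.sum_nonneg fun l _ => Real.rpow_nonneg (abs_nonneg _) _)
      (Finset.sum_le_sum fun l _ => ?_) (by positivity)
    refine Real.rpow_le_rpow (abs_nonneg _) ?_ hp0.le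
    have := hs1.dist_le_mul (x l) (y l)
    rw [Real.dist_eq] at this
    simpa using this
  have hSnonneg : 0 ≤ sSup Sset :=
    Real.sSup_nonneg (by
      rintro r ⟨s, _, _, rfl⟩
      exact Real.rpow_nonneg (Finset.sum_nonneg fun l _ => Real.rpow_nonneg (abs_nonneg _) _) _)
  have h1 : weakLp p (fun l => δY (x l) - δY (y l)) ≤ sSup Sset := by
    refine csSup_le ⟨_, ⟨0, by simp, rfl⟩⟩ ?_
    rintro r ⟨φ, hφ, rfl⟩
    refine le_csSup hSbdd ⟨fun z => φ (δY z), ?_, ?_, ?_⟩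
    · refine LipschitzWith.of_dist_le_mul fun w w' => ?_
      rw [NNReal.coe_one, one_mul, Real.dist_eq, ← map_sub]
      calc |φ (δY w - δY w')| = ‖φ (δY w - δY w')‖ := (Real.norm_eq_abs _).symm
        _ ≤ ‖φ‖ * ‖δY w - δY w'‖ := φ.le_opNorm _
        _ ≤ 1 * ‖δY w - δY w'‖ := by gcongr
        _ = dist w w' := by rw [one_mul, hFY.isometry]
    · simp [hFY.map_base]
    · refine congrArg (fun t => t ^ (1 / p)) ?_
      refine Finset.sum_congr rfl fun l _ => ?_
      rw [← map_sub]
  have h2 : weakLp q f ≤ weakLp q a := by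
    refine csSup_le ⟨_, ⟨0, by simp, rfl⟩⟩ ?_
    rintro r ⟨ψ, hψ, rfl⟩
    set u : StrongDual ℝ W →L[ℝ] StrongDual ℝ FW := (ContinuousLinearMap.compL ℝ FW W ℝ).flip β with hu
    have hu_apply : ∀ b : StrongDual ℝ W, u b = b.comp β := fun b => rfl
    have hunorm : ‖u‖ ≤ 1 := by
      refine ContinuousLinearMap.opNorm_le_bound _ zero_le_one fun b => ?_
      rw [hu_apply, one_mul]
      calc ‖b.comp β‖ ≤ ‖b‖ * ‖β‖ := ContinuousLinearMap.opNorm_comp_le _ _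
        _ ≤ ‖b‖ * 1 := mul_le_mul_of_nonneg_left hβ2 (norm_nonneg _)
        _ = ‖b‖ := mul_one _
    have hψu : ‖ψ.comp u‖ ≤ 1 := by
      calc ‖ψ.comp u‖ ≤ ‖ψ‖ * ‖u‖ := ContinuousLinearMap.opNorm_comp_le _ _
        _ ≤ 1 * 1 := mul_le_mul hψ hunorm (ContinuousLinearMap.opNorm_nonneg u) zero_le_one
        _ = 1 := one_mul 1
    exact le_csSup (weakLp_set_bddAbove q hq0 a) ⟨ψ.comp u, hψu, rfl⟩
  have h5 : wpNorm p q (∑ l, (δY (x l) - δY (y l)) ⊗ₜ[ℝ] f l) ≤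
      weakLp p (fun l => δY (x l) - δY (y l)) * weakLp q f := by
    refine csInf_le ?_ ⟨k, fun l => δY (x l) - δY (y l), f, rfl, rfl⟩
    refine ⟨0, ?_⟩
    rintro r ⟨m, n, h, -, rfl⟩
    exact mul_nonneg (weakLp_nonneg _ _) (weakLp_nonneg _ _)
  calc |∑ l, (a l (T (x l)) - a l (T (y l)))|
      = |∑ l, (f l (δW (T (x l))) - f l (δW (T (y l))))| := by rw [hLHS]
    _ ≤ K * wpNorm p q (∑ l, (δY (x l) - δY (y l)) ⊗ₜ[ℝ] f l) := hKle k x y f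
    _ ≤ K * (weakLp p (fun l => δY (x l) - δY (y l)) * weakLp q f) :=
        mul_le_mul_of_nonneg_left h5 hK.le
    _ ≤ K * (sSup Sset * weakLp q a) := by
        refine mul_le_mul_of_nonneg_left ?_ hK.le
        exact mul_le_mul h1 h2 (weakLp_nonneg _ _) hSnonneg
    _ = K * sSup Sset * weakLp q a := (mul_assoc _ _ _).symm
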